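/- Let A and B be n×n complex positive definite matrices with A ≤ B in the Loewner order, and let p ∈ (0,1]. Then L_p(A,B) + K_p(A,B) ≤ T_p(A|B) ≤ R_p(A,B) + K_p(A,B) in the Loewner order, where L_p(A,B) := (1/24)·(p−1)·(p−2)·(A #_p B − 3·A ♮_{p−1} B + 3·A ♮_{p−2} B − A ♮_{p−3} B) and R_p(A,B) := (1/24)·(p−1)·(p−2)·(A ♮_3 B − 3·A ♮_2 B + 3·B − A). -/

import Mathlib

open Matrix ComplexOrder

/-- Real power of a (Hermitian) complex matrix via the continuous functional calculus,
corresponding to `Matrix.PosDef.rpow` on positive definite matrices. -/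
noncomputable def mrpow {n : Type*} [Fintype n] [DecidableEq n]
    (A : Matrix n n ℂ) (r : ℝ) : Matrix n n ℂ :=
  cfc (fun t : ℝ => t ^ r) A

/-- The Loewner order: `loe X Y` means `Y - X` is positive semidefinite. -/
def loe {n : Type*} [Fintype n] (X Y : Matrix n n ℂ) : Prop :=
  (Y - X).PosSemidef

/-- `A ♮ᵣ B = A^{1/2} (A^{-1/2} B A^{-1/2})^r A^{1/2}`; for `r ∈ [0,1]` this is the
weighted geometric mean `A #ᵣ B`. -/
noncomputable def natu {n : Type*} [Fintype n] [DecidableEq n]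
    (A B : Matrix n n ℂ) (r : ℝ) : Matrix n n ℂ :=
  mrpow A (1 / 2) * mrpow (mrpow A (-(1 / 2)) * B * mrpow A (-(1 / 2))) r * mrpow A (1 / 2)

/-- The Tsallis relative operator entropy `T_p(A|B) = (A #_p B - A) / p`. -/
noncomputable def TsallisEntropy {n : Type*} [Fintype n] [DecidableEq n]
    (A B : Matrix n n ℂ) (p : ℝ) : Matrix n n ℂ :=
  (1 / p : ℝ) • (natu A B p - A)

/-- `K_p(A,B) = A^{1/2} ((A^{-1/2} B A^{-1/2} + I)/2)^{p-1} (A^{-1/2} B A^{-1/2} - I) A^{1/2}`. -/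
noncomputable def Kp {n : Type*} [Fintype n] [DecidableEq n]
    (A B : Matrix n n ℂ) (p : ℝ) : Matrix n n ℂ :=
  mrpow A (1 / 2) *
    mrpow ((1 / 2 : ℝ) • (mrpow A (-(1 / 2)) * B * mrpow A (-(1 / 2)) + 1)) (p - 1) *
    (mrpow A (-(1 / 2)) * B * mrpow A (-(1 / 2)) - 1) * mrpow A (1 / 2)

/-- `J_p(A,B) = (1/2)(A #_p B - A ♮_{p-1} B + B - A)`. -/
noncomputable def Jp {n : Type*} [Fintype n] [DecidableEq n]
    (A B : Matrix n n ℂ) (p : ℝ) : Matrix n n ℂ :=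
  (1 / 2 : ℝ) • (natu A B p - natu A B (p - 1) + B - A)

/-- `L_p(A,B) = (1/24)(p-1)(p-2)(A #_p B - 3 A ♮_{p-1} B + 3 A ♮_{p-2} B - A ♮_{p-3} B)`. -/
noncomputable def Lp {n : Type*} [Fintype n] [DecidableEq n]
    (A B : Matrix n n ℂ) (p : ℝ) : Matrix n n ℂ :=
  ((1 / 24) * (p - 1) * (p - 2) : ℝ) •
    (natu A B p - (3 : ℝ) • natu A B (p - 1) + (3 : ℝ) • natu A B (p - 2) - natu A B (p - 3))

/-- `R_p(A,B) = (1/24)(p-1)(p-2)(A ♮_3 B - 3 A ♮_2 B + 3 B - A)`. -/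
noncomputable def Rp {n : Type*} [Fintype n] [DecidableEq n]
    (A B : Matrix n n ℂ) (p : ℝ) : Matrix n n ℂ :=
  ((1 / 24) * (p - 1) * (p - 2) : ℝ) •
    (natu A B 3 - (3 : ℝ) • natu A B 2 + (3 : ℝ) • B - A)

/-!  ### Auxiliary scalar analysis -/

section ScalarAux

open Set intervalIntegral MeasureTheory

/-- Tangent line lies below a convex function. -/
lemma tangent_le_of_convexOn {S : Set ℝ} {φ : ℝ → ℝ} {m t d : ℝ}
    (hc : ConvexOn ℝ S φ) (hm : m ∈ S) (ht : t ∈ S) (hd : HasDerivAt φ d m) :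
    φ m + d * (t - m) ≤ φ t := by
  rcases lt_trichotomy t m with h | h | h
  · have := hc.slope_le_of_hasDerivAt ht hm h hd
    rw [slope_def_field] at this
    have hmt : 0 < m - t := by linarith
    rw [div_le_iff₀ hmt] at this
    nlinarith
  · simp [h]
  · have := hc.le_slope_of_hasDerivAt hm ht h hd
    rw [slope_def_field] at this
    have hmt : 0 < t - m := by linarith
    rw [le_div_iff₀ hmt] at this
    nlinarith

/-- Second-order Taylor lower bound for `t ^ (p-1)` from convexity. -/
lemma taylor_lower (p K x m t : ℝ) (hm : m ∈ Icc 1 x) (ht : t ∈ Icc 1 x)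
    (hK : ∀ s ∈ Icc 1 x, K ≤ (p - 1) * (p - 2) * s ^ (p - 3)) :
    m ^ (p - 1) + (p - 1) * m ^ (p - 2) * (t - m) + K / 2 * (t - m) ^ 2 ≤ t ^ (p - 1) := by
  set φ : ℝ → ℝ := fun s => s ^ (p - 1) - K / 2 * s ^ 2 with hφ
  have hd : ∀ s : ℝ, 0 < s → HasDerivAt φ ((p - 1) * s ^ (p - 2) - K * s) s := by
    intro s hs
    have h1 := Real.hasDerivAt_rpow_const (x := s) (p := p - 1) (Or.inl hs.ne')
    have h2 : HasDerivAt (fun y : ℝ => K / 2 * y ^ 2) (K / 2 * (2 * s)) s := by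
      simpa using (hasDerivAt_pow 2 s).const_mul (K / 2)
    have := h1.sub h2
    convert this using 1
    iterate 3 rfl
    have : p - 1 - 1 = p - 2 := by ring
    rw [this]; ring
  have hd2 : ∀ s : ℝ, 0 < s →
      HasDerivAt (fun y => (p - 1) * y ^ (p - 2) - K * y)
        ((p - 1) * ((p - 2) * s ^ (p - 3)) - K) s := by
    intro s hs
    have h1 := (Real.hasDerivAt_rpow_const (x := s) (p := p - 2) (Or.inl hs.ne')).const_mul (p - 1)
    have h2 : HasDerivAt (fun y : ℝ => K * y) K s := by
      simpa using (hasDerivAt_id s).const_mul K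
    have := h1.sub h2
    convert this using 1
    iterate 3 rfl
    have : p - 2 - 1 = p - 3 := by ring
    rw [this]
  have hcont : ContinuousOn φ (Icc 1 x) := by
    apply ContinuousOn.sub
    · intro s hs
      exact (Real.continuousAt_rpow_const s (p - 1)
        (Or.inl (by linarith [hs.1] : s ≠ 0))).continuousWithinAt
    · fun_prop
  have hconv : ConvexOn ℝ (Icc 1 x) φ := by
    apply convexOn_of_hasDerivWithinAt2_nonneg (f' := fun s => (p - 1) * s ^ (p - 2) - K * s)
      (f'' := fun s => (p - 1) * ((p - 2) * s ^ (p - 3)) - K) (convex_Icc 1 x) hcont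
    · intro s hs
      rw [interior_Icc] at hs
      exact (hd s (by linarith [hs.1])).hasDerivWithinAt
    · intro s hs
      rw [interior_Icc] at hs
      exact (hd2 s (by linarith [hs.1])).hasDerivWithinAt
    · intro s hs
      rw [interior_Icc] at hs
      have := hK s ⟨hs.1.le, hs.2.le⟩
      linarith [this]
  have hm0 : 0 < m := by linarith [hm.1]
  have h := tangent_le_of_convexOn hconv hm ht (hd m hm0)
  simp only [hφ] at h
  nlinarith [h]

/-- Second-order Taylor upper bound for `t ^ (p-1)` from convexity. -/
lemma taylor_upper (p K x m t : ℝ) (hm : m ∈ Icc 1 x) (ht : t ∈ Icc 1 x)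
    (hK : ∀ s ∈ Icc 1 x, (p - 1) * (p - 2) * s ^ (p - 3) ≤ K) :
    t ^ (p - 1) ≤ m ^ (p - 1) + (p - 1) * m ^ (p - 2) * (t - m) + K / 2 * (t - m) ^ 2 := by
  set φ : ℝ → ℝ := fun s => K / 2 * s ^ 2 - s ^ (p - 1) with hφ
  have hd : ∀ s : ℝ, 0 < s → HasDerivAt φ (K * s - (p - 1) * s ^ (p - 2)) s := by
    intro s hs
    have h1 := Real.hasDerivAt_rpow_const (x := s) (p := p - 1) (Or.inl hs.ne')
    have h2 : HasDerivAt (fun y : ℝ => K / 2 * y ^ 2) (K / 2 * (2 * s)) s := by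
      simpa using (hasDerivAt_pow 2 s).const_mul (K / 2)
    have := h2.sub h1
    convert this using 1
    iterate 3 rfl
    have : p - 1 - 1 = p - 2 := by ring
    rw [this]; ring
  have hd2 : ∀ s : ℝ, 0 < s →
      HasDerivAt (fun y => K * y - (p - 1) * y ^ (p - 2))
        (K - (p - 1) * ((p - 2) * s ^ (p - 3))) s := by
    intro s hs
    have h1 := (Real.hasDerivAt_rpow_const (x := s) (p := p - 2) (Or.inl hs.ne')).const_mul (p - 1)
    have h2 : HasDerivAt (fun y : ℝ => K * y) K s := by
      simpa using (hasDerivAt_id s).const_mul K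
    have := h2.sub h1
    convert this using 1
    iterate 3 rfl
    have : p - 2 - 1 = p - 3 := by ring
    rw [this]
  have hcont : ContinuousOn φ (Icc 1 x) := by
    apply ContinuousOn.sub
    · fun_prop
    · intro s hs
      exact (Real.continuousAt_rpow_const s (p - 1)
        (Or.inl (by linarith [hs.1] : s ≠ 0))).continuousWithinAt
  have hconv : ConvexOn ℝ (Icc 1 x) φ := by
    apply convexOn_of_hasDerivWithinAt2_nonneg (f' := fun s => K * s - (p - 1) * s ^ (p - 2))
      (f'' := fun s => K - (p - 1) * ((p - 2) * s ^ (p - 3))) (convex_Icc 1 x) hcont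
    · intro s hs
      rw [interior_Icc] at hs
      exact (hd s (by linarith [hs.1])).hasDerivWithinAt
    · intro s hs
      rw [interior_Icc] at hs
      exact (hd2 s (by linarith [hs.1])).hasDerivWithinAt
    · intro s hs
      rw [interior_Icc] at hs
      have := hK s ⟨hs.1.le, hs.2.le⟩
      linarith [this]
  have hm0 : 0 < m := by linarith [hm.1]
  have h := tangent_le_of_convexOn hconv hm ht (hd m hm0)
  simp only [hφ] at h
  nlinarith [h]

lemma quad_hasDerivAt (a d K m : ℝ) (t : ℝ) :
    HasDerivAt (fun t => a * t + d / 2 * (t - m) ^ 2 + K / 6 * (t - m) ^ 3)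
      (a + d * (t - m) + K / 2 * (t - m) ^ 2) t := by
  have h1 : HasDerivAt (fun y : ℝ => y - m) 1 t := (hasDerivAt_id t).sub_const m
  have h2 : HasDerivAt (fun y : ℝ => (y - m) ^ 2) (2 * (t - m) ^ 1 * 1) t := h1.pow 2
  have h3 : HasDerivAt (fun y : ℝ => (y - m) ^ 3) (3 * (t - m) ^ 2 * 1) t := h1.pow 3
  have h0 : HasDerivAt (fun y : ℝ => a * y) a t := by simpa using (hasDerivAt_id t).const_mul a
  have := (h0.add (h2.const_mul (d / 2))).add (h3.const_mul (K / 6))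
  convert this using 1
  iterate 3 rfl
  ring

lemma integral_quad (a d K x m : ℝ) :
    ∫ t in (1:ℝ)..x, (a + d * (t - m) + K / 2 * (t - m) ^ 2) =
      (a * x + d / 2 * (x - m) ^ 2 + K / 6 * (x - m) ^ 3)
        - (a * 1 + d / 2 * (1 - m) ^ 2 + K / 6 * (1 - m) ^ 3) := by
  apply integral_eq_sub_of_hasDerivAt (fun t _ => quad_hasDerivAt a d K m t)
  apply Continuous.intervalIntegrable
  fun_prop

lemma integral_rpow' {p : ℝ} (hp0 : 0 < p) (x : ℝ) :
    ∫ t in (1:ℝ)..x, t ^ (p - 1) = (x ^ p - 1) / p := by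
  rw [integral_rpow (Or.inl (by linarith : (-1:ℝ) < p - 1))]
  have h : p - 1 + 1 = p := by ring
  rw [h, Real.one_rpow]

lemma rpow_intervalIntegrable {x : ℝ} (hx : 1 ≤ x) (r : ℝ) :
    IntervalIntegrable (fun t : ℝ => t ^ r) volume 1 x := by
  apply ContinuousOn.intervalIntegrable
  rw [uIcc_of_le hx]
  intro s hs
  exact (Real.continuousAt_rpow_const s r (Or.inl (by linarith [hs.1] : s ≠ 0))).continuousWithinAt

/-- Midpoint rule error bounds for `∫_1^x t^(p-1) dt`. -/
lemma midpoint_bounds {p x : ℝ} (hp0 : 0 < p) (hp1 : p ≤ 1) (hx : 1 ≤ x) :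
    (p-1) * (p-2) * x ^ (p-3) * (x-1)^3 / 24 ≤
        (x ^ p - 1) / p - ((x+1)/2) ^ (p-1) * (x-1) ∧
      (x ^ p - 1) / p - ((x+1)/2) ^ (p-1) * (x-1) ≤ (p-1) * (p-2) * (x-1)^3 / 24 := by
  set m : ℝ := (x+1)/2 with hm
  have hmIcc : m ∈ Icc 1 x := ⟨by rw [hm]; linarith, by rw [hm]; linarith⟩
  set a : ℝ := m ^ (p-1) with ha
  set d : ℝ := (p-1) * m ^ (p-2) with hd
  have h12 : 0 ≤ (p-1)*(p-2) := by nlinarith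
  have hint_f := rpow_intervalIntegrable hx (p-1)
  have hint_q : ∀ K : ℝ, IntervalIntegrable
      (fun t => a + d * (t - m) + K / 2 * (t - m) ^ 2) volume 1 x := by
    intro K; apply Continuous.intervalIntegrable; fun_prop
  have hlo : ∀ s ∈ Icc 1 x, (p-1) * (p-2) * x ^ (p-3) ≤ (p - 1) * (p - 2) * s ^ (p - 3) := by
    intro s hs
    have : x ^ (p-3) ≤ s ^ (p-3) :=
      Real.rpow_le_rpow_of_nonpos (by linarith [hs.1]) hs.2 (by linarith)
    exact mul_le_mul_of_nonneg_left this h12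
  have hhi : ∀ s ∈ Icc 1 x, (p - 1) * (p - 2) * s ^ (p - 3) ≤ (p-1)*(p-2) := by
    intro s hs
    have : s ^ (p-3) ≤ 1 := Real.rpow_le_one_of_one_le_of_nonpos hs.1 (by linarith)
    calc (p - 1) * (p - 2) * s ^ (p - 3) ≤ (p-1)*(p-2) * 1 := mul_le_mul_of_nonneg_left this h12
      _ = (p-1)*(p-2) := by ring
  have hIlo := integral_mono_on hx (hint_q ((p-1) * (p-2) * x ^ (p-3))) hint_f
    (fun t ht => taylor_lower p ((p-1) * (p-2) * x ^ (p-3)) x m t hmIcc ht hlo)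
  have hIhi := integral_mono_on hx hint_f (hint_q ((p-1)*(p-2)))
    (fun t ht => taylor_upper p ((p-1)*(p-2)) x m t hmIcc ht hhi)
  rw [integral_rpow' hp0, integral_quad] at hIlo hIhi
  have hxm : x - m = (x-1)/2 := by rw [hm]; ring
  have h1m : 1 - m = -((x-1)/2) := by rw [hm]; ring
  have e : ∀ K : ℝ, (a * x + d / 2 * ((x-1)/2) ^ 2 + K / 6 * ((x-1)/2) ^ 3)
        - (a * 1 + d / 2 * (-((x-1)/2)) ^ 2 + K / 6 * (-((x-1)/2)) ^ 3)
      = a * (x-1) + K * (x-1)^3 / 24 := by intro K; ring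
  constructor
  · rw [hxm, h1m, e ((p-1) * (p-2) * x ^ (p-3))] at hIlo
    linarith
  · rw [hxm, h1m, e ((p-1)*(p-2))] at hIhi
    linarith

lemma scalar_lower {p x : ℝ} (hp0 : 0 < p) (hp1 : p ≤ 1) (hx : 1 ≤ x) :
    0 ≤ (1/p) * (x ^ p - 1) -
      ((1/24*(p-1)*(p-2)) * (x ^ p - 3 * x ^ (p-1) + 3 * x ^ (p-2) - x ^ (p-3))
        + ((x+1)/2) ^ (p-1) * (x - 1)) := by
  have hx0 : (0:ℝ) < x := by linarith
  have e3 : x ^ p = x ^ (p-3) * x ^ (3:ℕ) := by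
    rw [← Real.rpow_natCast x 3, ← Real.rpow_add hx0]
    norm_num
  have e2 : x ^ (p-1) = x ^ (p-3) * x ^ (2:ℕ) := by
    rw [← Real.rpow_natCast x 2, ← Real.rpow_add hx0]
    congr 1; ring
  have e1 : x ^ (p-2) = x ^ (p-3) * x ^ (1:ℕ) := by
    rw [← Real.rpow_natCast x 1, ← Real.rpow_add hx0]
    congr 1; ring
  have expand : x ^ p - 3 * x ^ (p-1) + 3 * x ^ (p-2) - x ^ (p-3)
      = x ^ (p-3) * (x-1)^3 := by rw [e3, e2, e1]; ring
  have key := (midpoint_bounds hp0 hp1 hx).1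
  rw [expand]
  have h : (1/p) * (x ^ p - 1) = (x ^ p - 1) / p := by ring
  rw [h]
  nlinarith [key]

lemma scalar_upper {p x : ℝ} (hp0 : 0 < p) (hp1 : p ≤ 1) (hx : 1 ≤ x) :
    0 ≤ (1/24*(p-1)*(p-2)) * (x ^ (3:ℝ) - 3 * x ^ (2:ℝ) + 3 * x - 1)
        + ((x+1)/2) ^ (p-1) * (x - 1) - (1/p) * (x ^ p - 1) := by
  have hx0 : (0:ℝ) < x := by linarith
  have e3 : x ^ (3:ℝ) = x ^ (3:ℕ) := by
    rw [← Real.rpow_natCast x 3]; norm_num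
  have e2 : x ^ (2:ℝ) = x ^ (2:ℕ) := by
    rw [← Real.rpow_natCast x 2]; norm_num
  have key := (midpoint_bounds hp0 hp1 hx).2
  rw [e3, e2]
  have h : (1/p) * (x ^ p - 1) = (x ^ p - 1) / p := by ring
  rw [h]
  nlinarith [key]

end ScalarAux

/-!  ### Auxiliary matrix lemmas -/

section MatrixAux

variable {n : Type*} [Fintype n] [DecidableEq n]

lemma contOn (f : ℝ → ℝ) (C : Matrix n n ℂ) : ContinuousOn f (spectrum ℝ C) :=
  (Matrix.finite_real_spectrum (A := C)).continuousOn f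

lemma contOn' (f g : ℝ → ℝ) (C : Matrix n n ℂ) : ContinuousOn g (f '' spectrum ℝ C) :=
  ((Matrix.finite_real_spectrum (A := C)).image f).continuousOn g

lemma cfc_psd {C : Matrix n n ℂ} (hC : C.IsHermitian) {h : ℝ → ℝ}
    (hh : ∀ x ∈ spectrum ℝ C, 0 ≤ h x) : (cfc h C).PosSemidef := by
  rw [hC.cfc_eq, Matrix.IsHermitian.cfc, Unitary.conjStarAlgAut_apply]
  rw [Matrix.star_eq_conjTranspose]
  apply Matrix.PosSemidef.mul_mul_conjTranspose_same
  refine Matrix.posSemidef_diagonal_iff.mpr fun i => ?_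
  simp only [Function.comp_apply]
  rw [RCLike.ofReal_nonneg]
  exact hh _ (hC.eigenvalues_mem_spectrum_real i)

lemma conj_cfc_psd {S C : Matrix n n ℂ} (hS : IsSelfAdjoint S) (hC : C.IsHermitian)
    {h : ℝ → ℝ} (hh : ∀ x ∈ spectrum ℝ C, 0 ≤ h x) : (S * cfc h C * S).PosSemidef := by
  have h1 := (cfc_psd hC hh).mul_mul_conjTranspose_same S
  have hSh : Sᴴ = S := hS
  rwa [hSh] at h1

lemma spec_one_le {C : Matrix n n ℂ} (hC : C.IsHermitian) (h1 : (C - 1).PosSemidef) :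
    ∀ x ∈ spectrum ℝ C, 1 ≤ x := by
  intro x hx
  rw [hC.spectrum_real_eq_range_eigenvalues] at hx
  obtain ⟨i, rfl⟩ := hx
  have hv := hC.eigenvalues_eq i
  set v := ⇑(hC.eigenvectorBasis i) with hvdef
  have hnorm : star v ⬝ᵥ v = 1 := by
    rw [hvdef, dotProduct_comm, ← EuclideanSpace.inner_eq_star_dotProduct]
    have := hC.eigenvectorBasis.orthonormal.1 i
    rw [@inner_self_eq_norm_sq_to_K ℂ]
    rw [this]
    norm_num
  have hre := h1.re_dotProduct_nonneg v
  rw [Matrix.sub_mulVec, dotProduct_sub, Matrix.one_mulVec, map_sub, hnorm] at hre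
  simp only [RCLike.one_re] at hre
  linarith [hv ▸ hre]

end MatrixAux

theorem stmt10 {n : Type*} [Fintype n] [DecidableEq n] {A B : Matrix n n ℂ}
    (hA : A.PosDef) (hB : B.PosDef) (hAB : loe A B)
    {p : ℝ} (hp0 : 0 < p) (hp1 : p ≤ 1) :
    loe (Lp A B p + Kp A B p) (TsallisEntropy A B p) ∧
    loe (TsallisEntropy A B p) (Rp A B p + Kp A B p) := by
  have hAsa : IsSelfAdjoint A := hA.1.isSelfAdjoint
  set T : Matrix n n ℂ := mrpow A (-(1/2)) with hTdef
  set S : Matrix n n ℂ := mrpow A (1/2) with hSdef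
  set C : Matrix n n ℂ := T * B * T with hCdef
  have hSsa : IsSelfAdjoint S := by rw [hSdef, mrpow]; exact cfc_predicate _ A
  have hTsa : IsSelfAdjoint T := by rw [hTdef, mrpow]; exact cfc_predicate _ A
  have hTh : Tᴴ = T := hTsa
  have hApos : ∀ x ∈ spectrum ℝ A, 0 < x := by
    intro x hx
    rw [hA.1.spectrum_real_eq_range_eigenvalues] at hx
    obtain ⟨i, rfl⟩ := hx
    exact hA.eigenvalues_pos i
  have hST : S * T = 1 := by
    rw [hSdef, hTdef, mrpow, mrpow, ← cfc_mul _ _ A (contOn _ A) (contOn _ A)]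
    have heq : (spectrum ℝ A).EqOn (fun x : ℝ => x ^ (1/2:ℝ) * x ^ (-(1/2):ℝ))
        (fun _ => (1:ℝ)) := by
      intro x hx
      have hx0 := hApos x hx
      simp only
      rw [← Real.rpow_add hx0]
      norm_num
    rw [cfc_congr heq]
    exact cfc_const_one ℝ A hAsa
  have hTS : T * S = 1 := by
    rw [hSdef, hTdef, mrpow, mrpow, ← cfc_mul _ _ A (contOn _ A) (contOn _ A)]
    have heq : (spectrum ℝ A).EqOn (fun x : ℝ => x ^ (-(1/2):ℝ) * x ^ ((1/2):ℝ))
        (fun _ => (1:ℝ)) := by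
      intro x hx
      have hx0 := hApos x hx
      simp only
      rw [← Real.rpow_add hx0]
      norm_num
    rw [cfc_congr heq]
    exact cfc_const_one ℝ A hAsa
  have hSS : S * S = A := by
    rw [hSdef, mrpow, ← cfc_mul _ _ A (contOn _ A) (contOn _ A)]
    have heq : (spectrum ℝ A).EqOn (fun x : ℝ => x ^ ((1/2):ℝ) * x ^ ((1/2):ℝ)) id := by
      intro x hx
      have hx0 := hApos x hx
      simp only [id]
      rw [← Real.rpow_add hx0]
      norm_num
    rw [cfc_congr heq]
    exact cfc_id ℝ A hAsa
  have hTAT : T * A * T = 1 := by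
    have hArep : cfc (fun x : ℝ => x ^ (1:ℝ)) A = A := by
      rw [show (fun x : ℝ => x ^ (1:ℝ)) = (id : ℝ → ℝ) from funext fun x => Real.rpow_one x]
      exact cfc_id ℝ A hAsa
    conv_lhs => rw [← hArep]
    rw [hTdef, mrpow, ← cfc_mul _ _ A (contOn _ A) (contOn _ A),
      ← cfc_mul _ _ A (contOn _ A) (contOn _ A)]
    have heq : (spectrum ℝ A).EqOn (fun x : ℝ => x ^ (-(1/2):ℝ) * x ^ (1:ℝ) * x ^ (-(1/2):ℝ))
        (fun _ => (1:ℝ)) := by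
      intro x hx
      have hx0 := hApos x hx
      simp only
      rw [← Real.rpow_add hx0, ← Real.rpow_add hx0]
      norm_num
    rw [cfc_congr heq]
    exact cfc_const_one ℝ A hAsa
  have hCh : C.IsHermitian := by
    show Cᴴ = C
    rw [hCdef, Matrix.conjTranspose_mul, Matrix.conjTranspose_mul, hTh, hB.1.eq,
      Matrix.mul_assoc]
  have hCsa : IsSelfAdjoint C := hCh.isSelfAdjoint
  have hC1 : (C - 1).PosSemidef := by
    have hd : C - 1 = Tᴴ * (B - A) * T := by
      rw [hTh, Matrix.mul_sub, Matrix.sub_mul, hCdef, hTAT]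
    rw [hd]
    exact Matrix.PosSemidef.conjTranspose_mul_mul_same (hAB : (B - A).PosSemidef) T
  have hspec1 : ∀ x ∈ spectrum ℝ C, 1 ≤ x := spec_one_le hCh hC1
  have eF : ∀ r : ℝ, mrpow C r = cfc (fun x : ℝ => x ^ r) C := fun r => rfl
  have repB : B = S * cfc (fun x : ℝ => x) C * S := by
    rw [cfc_id' ℝ C hCsa, hCdef, ← Matrix.mul_assoc, ← Matrix.mul_assoc, hST,
      Matrix.one_mul, Matrix.mul_assoc, hTS, Matrix.mul_one]
  have repA : A = S * cfc (fun _ : ℝ => (1:ℝ)) C * S := by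
    rw [cfc_const_one ℝ C hCsa, Matrix.mul_one, hSS]
  have hplus : cfc (fun x : ℝ => (x+1)/2) C = (1/2 : ℝ) • (C + 1) := by
    rw [show (fun x : ℝ => (x+1)/2) = (fun x : ℝ => (1/2 : ℝ) * (x + 1)) from
      funext fun x => by ring]
    rw [cfc_const_mul _ _ C (contOn _ C)]
    congr 1
    rw [cfc_add C (fun x : ℝ => x) (fun _ => (1:ℝ)) (contOn _ C) (contOn _ C)]
    rw [cfc_id' ℝ C hCsa, cfc_const_one ℝ C hCsa]
  have eD : mrpow ((1/2 : ℝ) • (C + 1)) (p-1) = cfc (fun x : ℝ => ((x+1)/2) ^ (p-1)) C := by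
    rw [mrpow, ← hplus, ← cfc_comp' (fun t : ℝ => t ^ (p-1)) (fun x : ℝ => (x+1)/2) C
      (contOn' _ _ C) (contOn _ C) hCsa]
  have eC1 : C - 1 = cfc (fun x : ℝ => x - 1) C := by
    rw [cfc_sub (fun x : ℝ => x) (fun _ => (1:ℝ)) C (contOn _ C) (contOn _ C),
      cfc_id' ℝ C hCsa, cfc_const_one ℝ C hCsa]
  have eKK : cfc (fun x : ℝ => ((x+1)/2) ^ (p-1)) C * cfc (fun x : ℝ => x - 1) C
      = cfc (fun x : ℝ => ((x+1)/2) ^ (p-1) * (x - 1)) C :=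
    (cfc_mul _ _ C (contOn _ C) (contOn _ C)).symm
  -- expansion of the two master functions
  have eH1 : cfc (fun x : ℝ => (1/p) * (x ^ p - 1) -
        ((1/24*(p-1)*(p-2)) * (x ^ p - 3 * x ^ (p-1) + 3 * x ^ (p-2) - x ^ (p-3))
          + ((x+1)/2) ^ (p-1) * (x - 1))) C
      = (1/p : ℝ) • (cfc (fun x : ℝ => x ^ p) C - cfc (fun _ : ℝ => (1:ℝ)) C) -
        (((1/24)*(p-1)*(p-2) : ℝ) • (cfc (fun x : ℝ => x ^ p) C
            - (3:ℝ) • cfc (fun x : ℝ => x ^ (p-1)) C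
            + (3:ℝ) • cfc (fun x : ℝ => x ^ (p-2)) C
            - cfc (fun x : ℝ => x ^ (p-3)) C)
          + cfc (fun x : ℝ => ((x+1)/2) ^ (p-1) * (x - 1)) C) := by
    rw [cfc_sub (fun x : ℝ => (1/p) * (x ^ p - 1))
      (fun x : ℝ => (1/24*(p-1)*(p-2)) * (x ^ p - 3 * x ^ (p-1) + 3 * x ^ (p-2) - x ^ (p-3))
        + ((x+1)/2) ^ (p-1) * (x - 1)) C (contOn _ C) (contOn _ C)]
    rw [cfc_const_mul (1/p) (fun x : ℝ => x ^ p - 1) C (contOn _ C)]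
    rw [cfc_sub (fun x : ℝ => x ^ p) (fun _ : ℝ => (1:ℝ)) C (contOn _ C) (contOn _ C)]
    rw [cfc_add C
      (fun x : ℝ => (1/24*(p-1)*(p-2)) * (x ^ p - 3 * x ^ (p-1) + 3 * x ^ (p-2) - x ^ (p-3)))
      (fun x : ℝ => ((x+1)/2) ^ (p-1) * (x - 1)) (contOn _ C) (contOn _ C)]
    rw [cfc_const_mul (1/24*(p-1)*(p-2))
      (fun x : ℝ => x ^ p - 3 * x ^ (p-1) + 3 * x ^ (p-2) - x ^ (p-3)) C (contOn _ C)]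
    rw [cfc_sub (fun x : ℝ => x ^ p - 3 * x ^ (p-1) + 3 * x ^ (p-2))
      (fun x : ℝ => x ^ (p-3)) C (contOn _ C) (contOn _ C)]
    rw [cfc_add C (fun x : ℝ => x ^ p - 3 * x ^ (p-1)) (fun x : ℝ => 3 * x ^ (p-2))
      (contOn _ C) (contOn _ C)]
    rw [cfc_sub (fun x : ℝ => x ^ p) (fun x : ℝ => 3 * x ^ (p-1)) C (contOn _ C) (contOn _ C)]
    rw [cfc_const_mul (3:ℝ) (fun x : ℝ => x ^ (p-1)) C (contOn _ C)]
    rw [cfc_const_mul (3:ℝ) (fun x : ℝ => x ^ (p-2)) C (contOn _ C)]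
  have eH2 : cfc (fun x : ℝ => (1/24*(p-1)*(p-2)) * (x ^ (3:ℝ) - 3 * x ^ (2:ℝ) + 3 * x - 1)
          + ((x+1)/2) ^ (p-1) * (x - 1) - (1/p) * (x ^ p - 1)) C
      = (((1/24)*(p-1)*(p-2) : ℝ) • (cfc (fun x : ℝ => x ^ (3:ℝ)) C
            - (3:ℝ) • cfc (fun x : ℝ => x ^ (2:ℝ)) C
            + (3:ℝ) • cfc (fun x : ℝ => x) C
            - cfc (fun _ : ℝ => (1:ℝ)) C)
          + cfc (fun x : ℝ => ((x+1)/2) ^ (p-1) * (x - 1)) C)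
        - (1/p : ℝ) • (cfc (fun x : ℝ => x ^ p) C - cfc (fun _ : ℝ => (1:ℝ)) C) := by
    rw [cfc_sub (fun x : ℝ => (1/24*(p-1)*(p-2)) * (x ^ (3:ℝ) - 3 * x ^ (2:ℝ) + 3 * x - 1)
        + ((x+1)/2) ^ (p-1) * (x - 1))
      (fun x : ℝ => (1/p) * (x ^ p - 1)) C (contOn _ C) (contOn _ C)]
    rw [cfc_const_mul (1/p) (fun x : ℝ => x ^ p - 1) C (contOn _ C)]
    rw [cfc_sub (fun x : ℝ => x ^ p) (fun _ : ℝ => (1:ℝ)) C (contOn _ C) (contOn _ C)]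
    rw [cfc_add C
      (fun x : ℝ => (1/24*(p-1)*(p-2)) * (x ^ (3:ℝ) - 3 * x ^ (2:ℝ) + 3 * x - 1))
      (fun x : ℝ => ((x+1)/2) ^ (p-1) * (x - 1)) (contOn _ C) (contOn _ C)]
    rw [cfc_const_mul (1/24*(p-1)*(p-2))
      (fun x : ℝ => x ^ (3:ℝ) - 3 * x ^ (2:ℝ) + 3 * x - 1) C (contOn _ C)]
    rw [cfc_sub (fun x : ℝ => x ^ (3:ℝ) - 3 * x ^ (2:ℝ) + 3 * x)
      (fun _ : ℝ => (1:ℝ)) C (contOn _ C) (contOn _ C)]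
    rw [cfc_add C (fun x : ℝ => x ^ (3:ℝ) - 3 * x ^ (2:ℝ)) (fun x : ℝ => 3 * x)
      (contOn _ C) (contOn _ C)]
    rw [cfc_sub (fun x : ℝ => x ^ (3:ℝ)) (fun x : ℝ => 3 * x ^ (2:ℝ)) C (contOn _ C) (contOn _ C)]
    rw [cfc_const_mul (3:ℝ) (fun x : ℝ => x ^ (2:ℝ)) C (contOn _ C)]
    rw [cfc_const_mul (3:ℝ) (fun x : ℝ => x) C (contOn _ C)]
  constructor
  · show (TsallisEntropy A B p - (Lp A B p + Kp A B p)).PosSemidef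
    have hrep : TsallisEntropy A B p - (Lp A B p + Kp A B p)
        = S * cfc (fun x : ℝ => (1/p) * (x ^ p - 1) -
            ((1/24*(p-1)*(p-2)) * (x ^ p - 3 * x ^ (p-1) + 3 * x ^ (p-2) - x ^ (p-3))
              + ((x+1)/2) ^ (p-1) * (x - 1))) C * S := by
      rw [eH1]
      unfold TsallisEntropy Lp Kp natu
      rw [← hSdef, ← hTdef, ← hCdef]
      rw [eF p, eF (p-1), eF (p-2), eF (p-3), eD, eC1]
      rw [Matrix.mul_assoc S (cfc (fun x : ℝ => ((x+1)/2) ^ (p-1)) C)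
        (cfc (fun x : ℝ => x - 1) C), eKK]
      rw [repA]
      simp only [Matrix.mul_add, Matrix.add_mul, Matrix.mul_sub, Matrix.sub_mul,
        mul_smul_comm, smul_mul_assoc]
    rw [hrep]
    exact conj_cfc_psd hSsa hCh (fun x hx => scalar_lower hp0 hp1 (hspec1 x hx))
  · show (Rp A B p + Kp A B p - TsallisEntropy A B p).PosSemidef
    have hrep : Rp A B p + Kp A B p - TsallisEntropy A B p
        = S * cfc (fun x : ℝ => (1/24*(p-1)*(p-2)) * (x ^ (3:ℝ) - 3 * x ^ (2:ℝ) + 3 * x - 1)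
            + ((x+1)/2) ^ (p-1) * (x - 1) - (1/p) * (x ^ p - 1)) C * S := by
      rw [eH2]
      unfold TsallisEntropy Rp Kp natu
      rw [← hSdef, ← hTdef, ← hCdef]
      rw [eF p, eF (3:ℝ), eF (2:ℝ), eD, eC1]
      rw [Matrix.mul_assoc S (cfc (fun x : ℝ => ((x+1)/2) ^ (p-1)) C)
        (cfc (fun x : ℝ => x - 1) C), eKK]
      rw [repA, repB]
      simp only [Matrix.mul_add, Matrix.add_mul, Matrix.mul_sub, Matrix.sub_mul,
        mul_smul_comm, smul_mul_assoc]
    rw [hrep]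
    exact conj_cfc_psd hSsa hCh (fun x hx => scalar_upper hp0 hp1 (hspec1 x hx))
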